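/- For real numbers r, s, t with r+s+t > 2, r+t > 1, s+t > 1, and for any x > 0, one has Θ(r,s,t,x) = Θ(r-1, s, t+1, x) + x · Θ(r, s-1, t+1, x). -/

import Mathlib

open Real

noncomputable def Theta (r s t x : ℝ) : ℝ :=
  ∑' n : ℕ, ∑' m : ℕ,
    1 / (((n : ℝ) + 1) ^ r * ((m : ℝ) + 1) ^ s * (((n : ℝ) + 1) + ((m : ℝ) + 1) * x) ^ t)

lemma summable_shift (p : ℝ) (hp : 1 < p) :
    Summable (fun n : ℕ => 1 / ((n : ℝ) + 1) ^ p) := by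
  have := (Real.summable_one_div_nat_rpow (p := p)).mpr hp
  have h2 := (summable_nat_add_iff 1).mpr this
  simpa using h2

set_option maxHeartbeats 1000000 in
lemma summable_theta (R S T x : ℝ) (h1 : 2 < R + S + T) (h2 : 1 < R + T) (h3 : 1 < S + T)
    (hx : 0 < x) :
    Summable (fun q : ℕ × ℕ =>
      1 / (((q.1 : ℝ) + 1) ^ R * ((q.2 : ℝ) + 1) ^ S *
        (((q.1 : ℝ) + 1) + ((q.2 : ℝ) + 1) * x) ^ T)) := by
  -- find p q C with 1<p, 1<q, 0<C and termwise bound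
  obtain ⟨p, q, C, hp, hq, hC, hbound⟩ :
      ∃ p q C : ℝ, 1 < p ∧ 1 < q ∧ 0 < C ∧ ∀ n m : ℕ,
        1 / (((n : ℝ) + 1) ^ R * ((m : ℝ) + 1) ^ S *
            (((n : ℝ) + 1) + ((m : ℝ) + 1) * x) ^ T)
          ≤ C * (1 / ((n : ℝ) + 1) ^ p * (1 / ((m : ℝ) + 1) ^ q)) := by
    rcases le_or_gt T 0 with hT | hT
    · refine ⟨R + T, S + T, (1 + x) ^ (-T), h2, h3, rpow_pos_of_pos (by linarith) _, ?_⟩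
      intro n m
      set N : ℝ := (n : ℝ) + 1 with hN
      set M : ℝ := (m : ℝ) + 1 with hM
      have hN0 : (0:ℝ) < N := by positivity
      have hM0 : (0:ℝ) < M := by positivity
      have hD0 : (0:ℝ) < N + M * x := by positivity
      have hN1 : (1:ℝ) ≤ N := by rw [hN]; have := Nat.cast_nonneg (α := ℝ) n; linarith
      have hM1 : (1:ℝ) ≤ M := by rw [hM]; have := Nat.cast_nonneg (α := ℝ) m; linarith
      have hle : N + M * x ≤ (1 + x) * N * M := by
        nlinarith [mul_nonneg (by linarith : (0:ℝ) ≤ M - 1) hN0.le,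
          mul_nonneg (mul_nonneg (by linarith : (0:ℝ) ≤ N - 1) hM0.le) hx.le]
      have key : ((1 + x) * N * M) ^ T ≤ (N + M * x) ^ T :=
        Real.rpow_le_rpow_of_nonpos hD0 hle hT
      have hpos : (0:ℝ) < ((1 + x) * N * M) ^ T := by positivity
      rw [div_le_iff₀ (by positivity)] at *
      have expand : ((1 + x) * N * M) ^ T = (1 + x) ^ T * N ^ T * M ^ T := by
        rw [Real.mul_rpow (by positivity) (by positivity),
          Real.mul_rpow (by positivity) (by positivity)]
      -- goal : 1 ≤ C * (...) * (N^R * M^S * (N+Mx)^T)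
      have hNRT : N ^ (R + T) = N ^ R * N ^ T := Real.rpow_add hN0 _ _
      have hMST : M ^ (S + T) = M ^ S * M ^ T := Real.rpow_add hM0 _ _
      have hxinv : (1 + x) ^ (-T) * (1 + x) ^ T = 1 := by
        rw [← Real.rpow_add (by positivity)]; simp
      calc (1:ℝ) = (1 + x) ^ (-T) * (1 / N ^ (R+T) * (1 / M ^ (S+T))) *
              (N ^ R * M ^ S * (((1 + x) * N * M) ^ T)) := by
            rw [expand, hNRT, hMST]
            field_simp
            linear_combination -hxinv
        _ ≤ (1 + x) ^ (-T) * (1 / N ^ (R+T) * (1 / M ^ (S+T))) *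
              (N ^ R * M ^ S * (N + M * x) ^ T) := by
            apply mul_le_mul_of_nonneg_left
            · apply mul_le_mul_of_nonneg_left key (by positivity)
            · positivity
    · -- T > 0 : pick u in (max 0 (1-R), min T (T - 1 + S))
      set u : ℝ := (max 0 (1 - R) + min T (T - 1 + S)) / 2 with hu
      have hlt : max 0 (1 - R) < min T (T - 1 + S) := by
        apply max_lt <;> apply lt_min <;> linarith
      have hu0 : 0 ≤ u := by
        have := le_max_left 0 (1 - R); simp only [hu]; linarith
      have huT : u ≤ T := by
        have := min_le_left T (T - 1 + S); simp only [hu]; linarith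
      have hRu : 1 < R + u := by
        have := le_max_right 0 (1 - R); simp only [hu]; linarith
      have hSu : 1 < S + T - u := by
        have := min_le_right T (T - 1 + S); simp only [hu]; linarith
      refine ⟨R + u, S + T - u, x ^ (u - T), hRu, hSu, rpow_pos_of_pos hx _, ?_⟩
      intro n m
      set N : ℝ := (n : ℝ) + 1 with hN
      set M : ℝ := (m : ℝ) + 1 with hM
      have hN0 : (0:ℝ) < N := by positivity
      have hM0 : (0:ℝ) < M := by positivity
      have hD0 : (0:ℝ) < N + M * x := by positivity
      have key : N ^ u * (M * x) ^ (T - u) ≤ (N + M * x) ^ T := by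
        have hT' : T = u + (T - u) := by ring
        calc N ^ u * (M * x) ^ (T - u)
            ≤ (N + M * x) ^ u * (N + M * x) ^ (T - u) := by
              apply mul_le_mul
              · exact Real.rpow_le_rpow hN0.le (by nlinarith) hu0
              · exact Real.rpow_le_rpow (by positivity) (by nlinarith) (by linarith)
              · positivity
              · positivity
          _ = (N + M * x) ^ T := by rw [← Real.rpow_add hD0]; ring_nf
      rw [div_le_iff₀ (by positivity)]
      have hNRu : N ^ (R + u) = N ^ R * N ^ u := Real.rpow_add hN0 _ _
      have hMSu : M ^ (S + T - u) = M ^ S * M ^ (T - u) := by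
        rw [← Real.rpow_add hM0]; ring_nf
      have hMx : (M * x) ^ (T - u) = M ^ (T - u) * x ^ (T - u) :=
        Real.mul_rpow hM0.le hx.le
      have hxuT : x ^ (u - T) * x ^ (T - u) = 1 := by
        rw [← Real.rpow_add hx]; simp
      calc (1:ℝ) = x ^ (u - T) * (1 / N ^ (R+u) * (1 / M ^ (S+T-u))) *
              (N ^ R * M ^ S * (N ^ u * (M * x) ^ (T - u))) := by
            rw [hNRu, hMSu, hMx]
            field_simp
            linear_combination -hxuT
        _ ≤ x ^ (u - T) * (1 / N ^ (R+u) * (1 / M ^ (S+T-u))) *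
              (N ^ R * M ^ S * (N + M * x) ^ T) := by
            apply mul_le_mul_of_nonneg_left
            · apply mul_le_mul_of_nonneg_left key (by positivity)
            · positivity
  -- conclude via comparison
  have hsum : Summable (fun z : ℕ × ℕ =>
      C * (1 / ((z.1 : ℝ) + 1) ^ p * (1 / ((z.2 : ℝ) + 1) ^ q))) := by
    apply Summable.mul_left
    exact (summable_shift p hp).mul_of_nonneg (summable_shift q hq)
      (fun n => by positivity) (fun m => by positivity)
  exact Summable.of_nonneg_of_le (fun z => by positivity) (fun z => hbound z.1 z.2) hsum

theorem theta_split (r s t : ℝ) (h1 : 2 < r + s + t) (h2 : 1 < r + t) (h3 : 1 < s + t)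
    (x : ℝ) (hx : 0 < x) :
    Theta r s t x = Theta (r - 1) s (t + 1) x + x * Theta r (s - 1) (t + 1) x := by
  set A : ℕ × ℕ → ℝ := fun q =>
    1 / (((q.1 : ℝ) + 1) ^ (r - 1) * ((q.2 : ℝ) + 1) ^ s *
      (((q.1 : ℝ) + 1) + ((q.2 : ℝ) + 1) * x) ^ (t + 1)) with hA
  set B : ℕ × ℕ → ℝ := fun q =>
    1 / (((q.1 : ℝ) + 1) ^ r * ((q.2 : ℝ) + 1) ^ (s - 1) *
      (((q.1 : ℝ) + 1) + ((q.2 : ℝ) + 1) * x) ^ (t + 1)) with hB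
  have hAs : Summable A := summable_theta (r - 1) s (t + 1) x
    (by linarith) (by linarith) (by linarith) hx
  have hBs : Summable B := summable_theta r (s - 1) (t + 1) x
    (by linarith) (by linarith) (by linarith) hx
  have hxBs : Summable (fun q => x * B q) := hBs.mul_left x
  -- termwise identity
  have key : ∀ n m : ℕ,
      1 / (((n : ℝ) + 1) ^ r * ((m : ℝ) + 1) ^ s * (((n : ℝ) + 1) + ((m : ℝ) + 1) * x) ^ t)
        = A (n, m) + x * B (n, m) := by
    intro n m
    simp only [hA, hB]
    set N : ℝ := (n : ℝ) + 1 with hN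
    set M : ℝ := (m : ℝ) + 1 with hM
    have hN0 : (0:ℝ) < N := by positivity
    have hM0 : (0:ℝ) < M := by positivity
    have hD0 : (0:ℝ) < N + M * x := by positivity
    have e1 : N ^ (r - 1) = N ^ r / N := by
      rw [Real.rpow_sub hN0, Real.rpow_one]
    have e2 : M ^ (s - 1) = M ^ s / M := by
      rw [Real.rpow_sub hM0, Real.rpow_one]
    have e3 : (N + M * x) ^ (t + 1) = (N + M * x) ^ t * (N + M * x) := by
      rw [Real.rpow_add hD0, Real.rpow_one]
    rw [e1, e2, e3]
    have p1 : N ^ r ≠ 0 := (Real.rpow_pos_of_pos hN0 _).ne'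
    have p2 : M ^ s ≠ 0 := (Real.rpow_pos_of_pos hM0 _).ne'
    have p3 : (N + M * x) ^ t ≠ 0 := (Real.rpow_pos_of_pos hD0 _).ne'
    field_simp
  have hst : Theta r s t x = ∑' q : ℕ × ℕ, (A q + x * B q) := by
    rw [Theta]
    rw [Summable.tsum_prod' (hAs.add hxBs) (fun n => (hAs.add hxBs).prod_factor n)]
    exact tsum_congr fun n => tsum_congr fun m => key n m
  rw [hst, Summable.tsum_add hAs hxBs, tsum_mul_left]
  rw [Theta, Theta,
    ← Summable.tsum_prod' hAs (fun n => hAs.prod_factor n),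
    ← Summable.tsum_prod' hBs (fun n => hBs.prod_factor n)]
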